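/- For integers m ≥ 0 and n ≥ 1, the number of acyclic orientations of the complete bipartite graph K_{m,n} (with parts L of size m and R of size n) having no sink in L equals n!·n^m − Σ_{j=1}^{n−1} (−1)^{j−1} · (n−j)! · (n−j)^m · S(n, n−j), where S(a,b) denotes the Stirling number of the second kind. -/

import Mathlib

/-- An orientation of a simple graph `G`, given as a relation `o` on vertices:
only edges of `G` are oriented, and each edge gets exactly one direction. -/
def IsOrientation {V : Type*} (G : SimpleGraph V) (o : V → V → Prop) : Prop :=
  (∀ u v, o u v → G.Adj u v) ∧ ∀ u v, G.Adj u v → (o u v ↔ ¬ o v u)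

/-- An orientation is acyclic when it has no directed cycle. -/
def IsAcyclicRel {V : Type*} (o : V → V → Prop) : Prop :=
  Irreflexive (Relation.TransGen o)

/-- `s` is a sink of the orientation `o`: no outgoing edges. -/
def IsSinkOf {V : Type*} (o : V → V → Prop) (s : V) : Prop := ∀ v, ¬ o s v

/-- The number of acyclic orientations of `G`. -/
noncomputable def aoCount {V : Type*} (G : SimpleGraph V) : ℕ :=
  Nat.card {o : V → V → Prop // IsOrientation G o ∧ IsAcyclicRel o}

/-- The number of acyclic orientations of `G` whose unique sink is `s`. -/
noncomputable def ausoCount {V : Type*} (G : SimpleGraph V) (s : V) : ℕ :=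
  Nat.card {o : V → V → Prop // IsOrientation G o ∧ IsAcyclicRel o ∧
    ∀ v, IsSinkOf o v ↔ v = s}

/-- Stirling numbers of the second kind. -/
def stirling : ℕ → ℕ → ℕ
  | 0, 0 => 1
  | 0, _ + 1 => 0
  | _ + 1, 0 => 0
  | n + 1, k + 1 => (k + 1) * stirling n (k + 1) + stirling n k

open Finset

def SurjFn (m j : ℕ) : Type :=
  {h : Fin m → Fin j // Function.Surjective h}
instance (m j : ℕ) : Finite (SurjFn m j) := Subtype.finite
noncomputable def sig (m j : ℕ) : ℕ := Nat.card (SurjFn m j)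

lemma sig_zero_zero : sig 0 0 = 1 := by
  have : Unique (SurjFn 0 0) :=
    { default := ⟨finZeroElim, fun b => b.elim0⟩
      uniq := fun a => Subtype.ext (funext fun x => x.elim0) }
  exact Nat.card_unique

lemma sig_zero_succ (j : ℕ) : sig 0 (j + 1) = 0 := by
  have : IsEmpty (SurjFn 0 (j+1)) := ⟨fun h => (h.2 0).choose.elim0⟩
  exact Nat.card_of_isEmpty

lemma sig_succ_zero (m : ℕ) : sig (m + 1) 0 = 0 := by
  have : IsEmpty (SurjFn (m+1) 0) := ⟨fun h => (h.1 0).elim0⟩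
  exact Nat.card_of_isEmpty

noncomputable def sigPhi (m j : ℕ) :
    Fin (j+1) × (SurjFn m (j+1) ⊕ SurjFn m j) → SurjFn (m+1) (j+1)
  | (a, Sum.inl h) => ⟨Fin.snoc h.1 a, by
      intro b
      obtain ⟨u, hu⟩ := h.2 b
      exact ⟨u.castSucc, by simp [hu]⟩⟩
  | (a, Sum.inr h) => ⟨Fin.snoc (fun u => a.succAbove (h.1 u)) a, by
      intro b
      rcases eq_or_ne b a with rfl | hb
      · exact ⟨Fin.last m, by simp⟩
      · obtain ⟨i, hi⟩ := Fin.exists_succAbove_eq hb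
        obtain ⟨u, hu⟩ := h.2 i
        exact ⟨u.castSucc, by simp [hu, hi]⟩⟩

lemma sigPhi_bij (m j : ℕ) : Function.Bijective (sigPhi m j) := by
  constructor
  · rintro ⟨a₁, x₁⟩ ⟨a₂, x₂⟩ hEq
    have hf : (sigPhi m j (a₁, x₁)).1 = (sigPhi m j (a₂, x₂)).1 := by rw [hEq]
    have hlast : a₁ = a₂ := by
      have := congrFun hf (Fin.last m)
      rcases x₁ with h₁ | h₁ <;> rcases x₂ with h₂ | h₂ <;>
        simpa [sigPhi] using this
    subst hlast
    have hrest : ∀ u : Fin m, (sigPhi m j (a₁, x₁)).1 u.castSucc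
        = (sigPhi m j (a₁, x₂)).1 u.castSucc := fun u => congrFun hf _
    rcases x₁ with h₁ | h₁ <;> rcases x₂ with h₂ | h₂
    · have : h₁.1 = h₂.1 := funext fun u => by simpa [sigPhi] using hrest u
      simp [Subtype.ext this]
    · exfalso
      obtain ⟨u, hu⟩ := h₁.2 a₁
      have := hrest u
      simp only [sigPhi, Fin.snoc_castSucc] at this
      rw [hu] at this
      exact Fin.succAbove_ne a₁ (h₂.1 u) this.symm
    · exfalso
      obtain ⟨u, hu⟩ := h₂.2 a₁
      have := hrest u
      simp only [sigPhi, Fin.snoc_castSucc] at this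
      rw [hu] at this
      exact Fin.succAbove_ne a₁ (h₁.1 u) this
    · have : h₁.1 = h₂.1 := funext fun u => by
        have := hrest u
        simp only [sigPhi, Fin.snoc_castSucc] at this
        exact Fin.succAbove_right_injective this
      simp [Subtype.ext this]
  · rintro ⟨f, hf⟩
    set a := f (Fin.last m) with ha
    set r : Fin m → Fin (j+1) := fun u => f u.castSucc with hr
    by_cases hsurj : Function.Surjective r
    · refine ⟨(a, Sum.inl ⟨r, hsurj⟩), Subtype.ext (funext fun x => ?_)⟩
      refine Fin.lastCases ?_ (fun u => ?_) x <;> simp [sigPhi, hr, ha]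
    · have hmiss : ∀ u, r u ≠ a := by
        intro u hu
        apply hsurj
        intro b
        rcases eq_or_ne b a with rfl | hb
        · exact ⟨u, hu⟩
        · obtain ⟨x, hx⟩ := hf b
          rcases Fin.eq_castSucc_or_eq_last x with ⟨u', rfl⟩ | rfl
          · exact ⟨u', hx⟩
          · exact absurd (ha.trans hx).symm hb
      have hspec : ∀ u, a.succAbove ((Fin.exists_succAbove_eq (hmiss u)).choose) = r u :=
        fun u => (Fin.exists_succAbove_eq (hmiss u)).choose_spec
      set g : Fin m → Fin j := fun u => (Fin.exists_succAbove_eq (hmiss u)).choose with hg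
      have hgsurj : Function.Surjective g := by
        intro i
        obtain ⟨x, hx⟩ := hf (a.succAbove i)
        rcases Fin.eq_castSucc_or_eq_last x with ⟨u', rfl⟩ | rfl
        · refine ⟨u', Fin.succAbove_right_injective (p := a) ?_⟩
          rw [hspec u']
          exact hx
        · exact absurd (ha.trans hx).symm (Fin.succAbove_ne a i)
      refine ⟨(a, Sum.inr ⟨g, hgsurj⟩), Subtype.ext (funext fun x => ?_)⟩
      refine Fin.lastCases ?_ (fun u => ?_) x
      · simp [sigPhi, ha]
      · simp [sigPhi, hspec u, hr]
        exact hspec u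

lemma sig_succ_succ (m j : ℕ) : sig (m + 1) (j + 1) = (j + 1) * (sig m (j + 1) + sig m j) := by
  have := Nat.card_congr (Equiv.ofBijective _ (sigPhi_bij m j)).symm
  rw [sig, this, Nat.card_prod, Nat.card_sum, Nat.card_eq_fintype_card (α := Fin (j+1)),
    Fintype.card_fin]
  rfl

def LevelFn (n j : ℕ) : Type :=
  {g : Fin n → Fin (j+1) // ∀ i : ℕ, i < j → ∃ v, (g v : ℕ) = i}
instance (n j : ℕ) : Finite (LevelFn n j) := Subtype.finite
noncomputable def gam (n j : ℕ) : ℕ := Nat.card (LevelFn n j)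

lemma coe_succAbove {j : ℕ} (p : Fin (j+2)) (z : Fin (j+1)) :
    ((p.succAbove z) : ℕ) = if (z:ℕ) < (p:ℕ) then (z:ℕ) else (z:ℕ)+1 := by
  rcases lt_or_ge (z:ℕ) (p:ℕ) with h | h
  · rw [Fin.succAbove_of_castSucc_lt _ _ (by simpa [Fin.lt_def] using h), if_pos h,
      Fin.coe_castSucc]
  · rw [Fin.succAbove_of_le_castSucc _ _ (by simpa [Fin.le_def] using h),
      if_neg (not_lt.mpr h), Fin.val_succ]

lemma gam_zero_right (n : ℕ) : gam n 0 = 1 := by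
  have : Unique (LevelFn n 0) :=
    { default := ⟨fun _ => 0, fun i hi => absurd hi (Nat.not_lt_zero i)⟩
      uniq := fun a => Subtype.ext (funext fun v => by
        have := (a.1 v).isLt
        exact Fin.ext (by simp only [Fin.val_zero]; omega)) }
  exact Nat.card_unique

lemma gam_zero_succ (j : ℕ) : gam 0 (j + 1) = 0 := by
  have : IsEmpty (LevelFn 0 (j+1)) := ⟨fun g => (g.2 0 (Nat.succ_pos j)).choose.elim0⟩
  exact Nat.card_of_isEmpty

noncomputable def gamPhi (n j : ℕ) :
    Fin (j+2) × LevelFn n (j+1) ⊕ Fin (j+1) × LevelFn n j → LevelFn (n+1) (j+1)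
  | Sum.inl (a, g) => ⟨Fin.snoc g.1 a, by
      intro i hi
      obtain ⟨v, hv⟩ := g.2 i hi
      exact ⟨v.castSucc, by simp [hv]⟩⟩
  | Sum.inr (i₀, g) => ⟨Fin.snoc (fun v => (i₀.castSucc).succAbove (g.1 v)) i₀.castSucc, by
      intro i hi
      rcases eq_or_ne i (i₀ : ℕ) with rfl | hne
      · exact ⟨Fin.last n, by simp⟩
      · have hw : (⟨i, Nat.lt_succ_of_lt hi⟩ : Fin (j+2)) ≠ i₀.castSucc :=
          Fin.ne_of_val_ne (by simpa using hne)
        obtain ⟨z, hz⟩ := Fin.exists_succAbove_eq hw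
        have hzlt : (z : ℕ) < j := by
          have := coe_succAbove i₀.castSucc z
          rw [hz] at this
          simp only [Fin.coe_castSucc] at this
          have hi₀ : (i₀ : ℕ) < j + 1 := i₀.isLt
          split at this <;> omega
        obtain ⟨v, hv⟩ := g.2 (z : ℕ) hzlt
        refine ⟨v.castSucc, ?_⟩
        have hgv : g.1 v = z := Fin.ext hv
        simp [hgv, hz]⟩

lemma gamPhi_bij (n j : ℕ) : Function.Bijective (gamPhi n j) := by
  constructor
  · rintro (⟨a₁, g₁⟩ | ⟨i₁, g₁⟩) (⟨a₂, g₂⟩ | ⟨i₂, g₂⟩) hEq <;>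
      have hf : (gamPhi n j _).1 = (gamPhi n j _).1 := congrArg Subtype.val hEq
    · have hlast : a₁ = a₂ := by simpa [gamPhi] using congrFun hf (Fin.last n)
      subst hlast
      have : g₁.1 = g₂.1 := funext fun v => by
        simpa [gamPhi] using congrFun hf v.castSucc
      rw [Subtype.ext this]
    · exfalso
      have hlast : a₁ = i₂.castSucc := by simpa [gamPhi] using congrFun hf (Fin.last n)
      obtain ⟨v, hv⟩ := g₁.2 (i₂ : ℕ) i₂.isLt
      have hg₁v : g₁.1 v = i₂.castSucc := Fin.ext (by simpa using hv)
      have := congrFun hf v.castSucc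
      simp only [gamPhi, Fin.snoc_castSucc] at this
      rw [hg₁v] at this
      exact Fin.succAbove_ne i₂.castSucc (g₂.1 v) this.symm
    · exfalso
      have hlast : i₁.castSucc = a₂ := by simpa [gamPhi] using congrFun hf (Fin.last n)
      obtain ⟨v, hv⟩ := g₂.2 (i₁ : ℕ) i₁.isLt
      have hg₂v : g₂.1 v = i₁.castSucc := Fin.ext (by simpa using hv)
      have := congrFun hf v.castSucc
      simp only [gamPhi, Fin.snoc_castSucc] at this
      rw [hg₂v] at this
      exact Fin.succAbove_ne i₁.castSucc (g₁.1 v) this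
    · have hlast : i₁ = i₂ := by
        have : i₁.castSucc = i₂.castSucc := by simpa [gamPhi] using congrFun hf (Fin.last n)
        exact Fin.castSucc_inj.mp this
      subst hlast
      have : g₁.1 = g₂.1 := funext fun v => by
        have := congrFun hf v.castSucc
        simp only [gamPhi, Fin.snoc_castSucc] at this
        exact Fin.succAbove_right_injective this
      rw [Subtype.ext this]
  · rintro ⟨G, hG⟩
    set a := G (Fin.last n) with ha
    set r : Fin n → Fin (j+2) := fun v => G v.castSucc with hr
    by_cases hc : ∀ i : ℕ, i < j + 1 → ∃ v : Fin n, ((r v) : ℕ) = i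
    · refine ⟨Sum.inl (a, ⟨r, hc⟩), Subtype.ext (funext fun x => ?_)⟩
      refine Fin.lastCases ?_ (fun v => ?_) x <;> simp [gamPhi, hr, ha]
    · push_neg at hc
      obtain ⟨i₀, hi₀lt, hmiss⟩ := hc
      have hax : (a : ℕ) = i₀ := by
        obtain ⟨x, hx⟩ := hG i₀ hi₀lt
        rcases Fin.eq_castSucc_or_eq_last x with ⟨v, rfl⟩ | rfl
        · exact absurd hx (hmiss v)
        · exact hx
      set p : Fin (j+2) := (⟨i₀, hi₀lt⟩ : Fin (j+1)).castSucc with hp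
      have hap : a = p := Fin.ext (by simpa [hp] using hax)
      have hne : ∀ v, r v ≠ p := fun v h => hmiss v (by rw [h, hp]; simp)
      have hspec : ∀ v, p.succAbove ((Fin.exists_succAbove_eq (hne v)).choose) = r v :=
        fun v => (Fin.exists_succAbove_eq (hne v)).choose_spec
      set g : Fin n → Fin (j+1) := fun v => (Fin.exists_succAbove_eq (hne v)).choose with hg
      have hgcond : ∀ i' : ℕ, i' < j → ∃ v, ((g v) : ℕ) = i' := by
        intro i' hi'
        set z : Fin (j+1) := ⟨i', Nat.lt_succ_of_lt hi'⟩ with hzdef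
        set w : Fin (j+2) := p.succAbove z with hw
        have hwlt : (w : ℕ) < j + 1 := by
          have := coe_succAbove p z
          rw [← hw] at this
          simp only [hzdef] at this
          split at this <;> omega
        obtain ⟨x, hx⟩ := hG (w : ℕ) hwlt
        rcases Fin.eq_castSucc_or_eq_last x with ⟨v, rfl⟩ | rfl
        · have hrv : r v = w := Fin.ext hx
          have : p.succAbove (g v) = p.succAbove z := by rw [hspec v, hrv]
          have := Fin.succAbove_right_injective this
          exact ⟨v, by rw [this]⟩
        · exfalso
          have : a = w := Fin.ext hx
          rw [hap] at this
          exact Fin.succAbove_ne p z this.symm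
      refine ⟨Sum.inr (⟨i₀, hi₀lt⟩, ⟨g, hgcond⟩), Subtype.ext (funext fun x => ?_)⟩
      refine Fin.lastCases ?_ (fun v => ?_) x
      · simp [gamPhi, ← hp, ← hap, ha]
      · simp [gamPhi, hspec v, hr, ← hp]
        exact hspec v

lemma gam_succ_succ (n j : ℕ) :
    gam (n + 1) (j + 1) = (j + 2) * gam n (j + 1) + (j + 1) * gam n j := by
  have := Nat.card_congr (Equiv.ofBijective _ (gamPhi_bij n j)).symm
  rw [gam, this, Nat.card_sum, Nat.card_prod, Nat.card_prod,
    Nat.card_eq_fintype_card (α := Fin (j+2)), Nat.card_eq_fintype_card (α := Fin (j+1)),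
    Fintype.card_fin, Fintype.card_fin]
  rfl

lemma stirling_succ_zero (n : ℕ) : stirling (n + 1) 0 = 0 := rfl

lemma stirling_eq_zero_of_lt : ∀ {n k : ℕ}, n < k → stirling n k = 0
  | 0, k + 1, _ => rfl
  | n + 1, k + 1, h => by
    have h1 : n < k + 1 := by omega
    have h2 : n < k := by omega
    simp [stirling, stirling_eq_zero_of_lt h1, stirling_eq_zero_of_lt h2]

lemma stirling_self : ∀ n : ℕ, stirling n n = 1
  | 0 => rfl
  | n + 1 => by
    simp [stirling, stirling_self n, stirling_eq_zero_of_lt (Nat.lt_succ_self n)]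

lemma choose_bracket (k j : ℕ) :
    ((k+1) * Nat.choose (k+1) j : ℤ) - k * Nat.choose k j
      = (j+1) * Nat.choose k j + j * Nat.choose k (j-1) := by
  cases j with
  | zero => simp
  | succ i =>
    have pascal : Nat.choose (k+1) (i+1) = Nat.choose k i + Nat.choose k (i+1) :=
      Nat.choose_succ_succ k i
    have key : (Nat.choose k (i+1) : ℤ) * (i+1) = Nat.choose k i * ((k:ℤ) - i) := by
      rcases le_or_gt i k with h | h
      · have h1 := Nat.choose_succ_right_eq k i
        have h2 : ((k:ℤ) - i) = ((k - i : ℕ) : ℤ) := by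
          rw [Nat.cast_sub h]
        rw [h2]
        exact_mod_cast h1
      · rw [Nat.choose_eq_zero_of_lt h, Nat.choose_eq_zero_of_lt (by omega)]; simp
    have : (i + 1 : ℕ) - 1 = i := rfl
    rw [this, pascal]
    push_cast
    linear_combination -key

/-- The explicit signed sum. -/
noncomputable def R (n j : ℕ) : ℤ :=
  ∑ k ∈ range (n + 1),
    (-1 : ℤ) ^ (n + k) * (Nat.choose k j : ℤ) * (Nat.factorial k : ℤ) * (stirling n k : ℤ)

lemma R_succ (n j : ℕ) : R (n + 1) j = (j + 1) * R n j + j * R n (j - 1) := by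
  have hsplit : R (n+1) j = ∑ k ∈ range (n+1),
      (-1:ℤ)^(n+1+(k+1)) * (Nat.choose (k+1) j) * (Nat.factorial (k+1)) * (stirling (n+1) (k+1)) := by
    rw [R, Finset.sum_range_succ' _ (n+1)]
    simp [stirling_succ_zero]
  have hterm : ∀ k ∈ range (n+1),
      (-1:ℤ)^(n+1+(k+1)) * (Nat.choose (k+1) j) * (Nat.factorial (k+1)) * (stirling (n+1) (k+1))
      = (-1:ℤ)^(n+k) * ((k+1) * Nat.choose (k+1) j) * (Nat.factorial k) * (stirling n k)
        + (-1:ℤ)^(n+k) * ((k+1) * Nat.choose (k+1) j) * ((k+1) * Nat.factorial k) * (stirling n (k+1)) := by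
    intro k _
    have hpow : (-1:ℤ)^(n+1+(k+1)) = (-1:ℤ)^(n+k) := by
      have : n+1+(k+1) = (n+k)+2 := by omega
      rw [this, pow_add]
      ring
    have hst : (stirling (n+1) (k+1) : ℤ) = (k+1) * stirling n (k+1) + stirling n k := by
      show ((stirling (n+1) (k+1) : ℕ) : ℤ) = _
      rw [show stirling (n+1) (k+1) = (k+1) * stirling n (k+1) + stirling n k from rfl]
      push_cast; ring
    rw [hpow, hst, Nat.factorial_succ]
    push_cast
    ring
  rw [hsplit, Finset.sum_congr rfl hterm, Finset.sum_add_distrib]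
  -- second piece: reindex
  have hre : ∑ k ∈ range (n+1),
      (-1:ℤ)^(n+k) * ((k+1) * Nat.choose (k+1) j) * ((k+1) * Nat.factorial k) * (stirling n (k+1))
      = ∑ k ∈ range (n+1), -((-1:ℤ)^(n+k) * (k * Nat.choose k j) * (Nat.factorial k) * (stirling n k)) := by
    have h1 : ∑ k ∈ range (n+2), -((-1:ℤ)^(n+k) * (k * Nat.choose k j) * (Nat.factorial k) * (stirling n k))
        = ∑ k ∈ range (n+1), -((-1:ℤ)^(n+(k+1)) * ((k+1) * Nat.choose (k+1) j) * (Nat.factorial (k+1)) * (stirling n (k+1))) := by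
      rw [Finset.sum_range_succ' _ (n+1)]
      simp
    have h2 : ∑ k ∈ range (n+2), -((-1:ℤ)^(n+k) * (k * Nat.choose k j) * (Nat.factorial k) * (stirling n k))
        = ∑ k ∈ range (n+1), -((-1:ℤ)^(n+k) * (k * Nat.choose k j) * (Nat.factorial k) * (stirling n k)) := by
      rw [Finset.sum_range_succ]
      simp [stirling_eq_zero_of_lt (Nat.lt_succ_self n)]
    rw [← h2, h1]
    apply Finset.sum_congr rfl
    intro k _
    have hpow : (-1:ℤ)^(n+(k+1)) = -(-1:ℤ)^(n+k) := by
      rw [show n+(k+1) = (n+k)+1 from rfl, pow_succ]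
      ring
    rw [hpow, Nat.factorial_succ]
    push_cast
    ring
  rw [hre, ← Finset.sum_add_distrib, R, R, Finset.mul_sum, Finset.mul_sum,
    ← Finset.sum_add_distrib]
  apply Finset.sum_congr rfl
  intro k _
  have hb := choose_bracket k j
  linear_combination ((-1:ℤ)^(n+k) * (Nat.factorial k) * (stirling n k)) * hb

lemma gam_eq_sum (n : ℕ) : ∀ j : ℕ, (gam n j : ℤ) = R n j := by
  induction n with
  | zero =>
    intro j
    cases j with
    | zero => simp [gam_zero_right, R, stirling]
    | succ i => simp [gam_zero_succ, R, stirling]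
  | succ n ih =>
    intro j
    cases j with
    | zero =>
      rw [gam_zero_right, R_succ]
      simp [← ih 0, gam_zero_right]
    | succ i =>
      rw [R_succ]
      have : ((i:ℤ)+1+1) = ((i:ℕ)+2 : ℤ) := by push_cast; ring
      rw [gam_succ_succ]
      push_cast
      rw [ih (i+1), ih i]
      ring

lemma sum_choose_sig (m : ℕ) : ∀ k : ℕ, ∑ j ∈ range (k + 1), (Nat.choose k j) * sig m j = k ^ m := by
  induction m with
  | zero =>
    intro k
    rw [Finset.sum_range_succ' _ k]
    simp [sig_zero_zero, sig_zero_succ]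
  | succ m ih =>
    intro k
    rw [Finset.sum_range_succ' _ k]
    simp only [sig_succ_zero, Nat.mul_zero, Nat.add_zero, sig_succ_succ]
    have hterm : ∀ j ∈ range k,
        Nat.choose k (j+1) * ((j+1) * (sig m (j+1) + sig m j))
        = (k - j) * (Nat.choose k j * sig m j) + ((j+1) * Nat.choose k (j+1)) * sig m (j+1) := by
      intro j hj
      have hjk : j < k := Finset.mem_range.mp hj
      have h1 : Nat.choose k (j+1) * (j+1) = Nat.choose k j * (k - j) := Nat.choose_succ_right_eq k j
      have h2 : Nat.choose k (j+1) * ((j+1) * (sig m (j+1) + sig m j))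
          = (Nat.choose k (j+1) * (j+1)) * sig m j + ((j+1) * Nat.choose k (j+1)) * sig m (j+1) := by
        ring
      rw [h2]
      congr 1
      rw [h1]
      ring
    rw [Finset.sum_congr rfl hterm, Finset.sum_add_distrib]
    -- first piece
    have hA : ∑ j ∈ range k, (k - j) * (Nat.choose k j * sig m j)
        = ∑ j ∈ range (k+1), (k - j) * (Nat.choose k j * sig m j) := by
      rw [Finset.sum_range_succ]
      simp
    -- second piece: reindex
    have hB : ∑ j ∈ range k, ((j+1) * Nat.choose k (j+1)) * sig m (j+1)
        = ∑ j ∈ range (k+1), j * (Nat.choose k j * sig m j) := by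
      rw [Finset.sum_range_succ' _ k]
      simp [mul_assoc]
    rw [hA, hB, ← Finset.sum_add_distrib]
    have hfin : ∀ j ∈ range (k+1), (k - j) * (Nat.choose k j * sig m j) + j * (Nat.choose k j * sig m j)
        = k * (Nat.choose k j * sig m j) := by
      intro j hj
      have hjk := Finset.mem_range.mp hj
      rw [← Nat.add_mul, Nat.sub_add_cancel (by omega)]
    rw [Finset.sum_congr rfl hfin, ← Finset.mul_sum, ih k]
    ring

lemma stirling_zero_right (n : ℕ) (hn : 1 ≤ n) : stirling n 0 = 0 := by
  cases n with
  | zero => omega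
  | succ k => rfl

theorem final_glue (m n : ℕ) (hn : 1 ≤ n)
    (hcard : (C : ℕ) = ∑ j ∈ range (n + 1), gam n j * sig m j) :
    (C : ℤ) =
      (Nat.factorial n : ℤ) * (n : ℤ) ^ m -
        ∑ j ∈ Finset.Icc 1 (n - 1),
          (-1 : ℤ) ^ (j - 1) * (Nat.factorial (n - j) : ℤ) * ((n - j : ℕ) : ℤ) ^ m *
            (stirling n (n - j) : ℤ) := by
  have h1 : (C : ℤ) = ∑ j ∈ range (n + 1), (gam n j : ℤ) * (sig m j : ℤ) := by
    rw [hcard]; push_cast; ring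
  rw [h1, Finset.sum_congr rfl (fun j _ => by rw [gam_eq_sum n j])]
  simp only [R, Finset.sum_mul]
  rw [Finset.sum_comm]
  have h2 : ∀ k ∈ range (n+1),
      (∑ j ∈ range (n+1),
        (-1:ℤ)^(n+k) * (Nat.choose k j) * (Nat.factorial k) * (stirling n k) * (sig m j))
      = (-1:ℤ)^(n+k) * (Nat.factorial k) * (stirling n k) * ((k:ℤ))^m := by
    intro k hk
    have hkn : k ≤ n := by have := Finset.mem_range.mp hk; omega
    have hinner : ∑ j ∈ range (n+1), ((Nat.choose k j : ℤ)) * (sig m j : ℤ)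
        = ((k:ℤ))^m := by
      have hsub : range (k+1) ⊆ range (n+1) := Finset.range_subset_range.mpr (by omega)
      have hzero : ∀ j ∈ range (n+1), j ∉ range (k+1) →
          ((Nat.choose k j : ℤ)) * (sig m j : ℤ) = 0 := by
        intro j _ hj
        have hlt : ¬ (j < k + 1) := fun h => hj (Finset.mem_range.mpr h)
        rw [Nat.choose_eq_zero_of_lt (by omega)]
        simp
      rw [← Finset.sum_subset hsub hzero]
      have := sum_choose_sig m k
      have hcast : ((∑ j ∈ range (k + 1), (Nat.choose k j) * sig m j : ℕ) : ℤ)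
          = ((k ^ m : ℕ) : ℤ) := by exact_mod_cast this
      push_cast at hcast
      convert hcast using 2
    calc ∑ j ∈ range (n+1),
        (-1:ℤ)^(n+k) * (Nat.choose k j) * (Nat.factorial k) * (stirling n k) * (sig m j)
        = ((-1:ℤ)^(n+k) * (Nat.factorial k) * (stirling n k)) *
            ∑ j ∈ range (n+1), ((Nat.choose k j : ℤ)) * (sig m j : ℤ) := by
          rw [Finset.mul_sum]; apply Finset.sum_congr rfl; intro j _; ring
      _ = (-1:ℤ)^(n+k) * (Nat.factorial k) * (stirling n k) * ((k:ℤ))^m := by rw [hinner]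
  rw [Finset.sum_congr rfl h2]
  -- now split the range
  have hsplit : range (n+1) = insert 0 (insert n (Finset.Icc 1 (n-1))) := by
    ext x
    simp only [Finset.mem_range, Finset.mem_insert, Finset.mem_Icc]
    omega
  have h0notin : (0 : ℕ) ∉ insert n (Finset.Icc 1 (n-1)) := by
    simp only [Finset.mem_insert, Finset.mem_Icc]
    omega
  have hnnotin : n ∉ Finset.Icc 1 (n-1) := by
    simp only [Finset.mem_Icc]
    omega
  rw [hsplit, Finset.sum_insert h0notin, Finset.sum_insert hnnotin]
  rw [stirling_zero_right n hn]
  have htop : (-1:ℤ)^(n+n) * (Nat.factorial n) * (stirling n n) * ((n:ℤ))^m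
      = (Nat.factorial n : ℤ) * (n:ℤ)^m := by
    rw [stirling_self, show n+n = 2*n by omega, pow_mul]
    norm_num
  rw [htop]
  have hneg : ∑ k ∈ Finset.Icc 1 (n-1),
      (-1:ℤ)^(n+k) * (Nat.factorial k) * (stirling n k) * ((k:ℤ))^m
      = -∑ j ∈ Finset.Icc 1 (n-1),
          (-1 : ℤ) ^ (j - 1) * (Nat.factorial (n - j) : ℤ) * ((n - j : ℕ) : ℤ) ^ m *
            (stirling n (n - j) : ℤ) := by
    rw [← Finset.sum_neg_distrib]
    apply Finset.sum_nbij' (i := fun k => n - k) (j := fun j => n - j)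
    · intro a ha
      have := Finset.mem_Icc.mp ha
      simp only [Finset.mem_Icc]
      omega
    · intro a ha
      have := Finset.mem_Icc.mp ha
      simp only [Finset.mem_Icc]
      omega
    · intro a ha
      have := Finset.mem_Icc.mp ha
      omega
    · intro a ha
      have := Finset.mem_Icc.mp ha
      omega
    · intro k hk
      have hk' := Finset.mem_Icc.mp hk
      have hrk : n - (n - k) = k := by omega
      rw [hrk]
      have hsg : (-1:ℤ)^(n+k) = -(-1:ℤ)^(n-k-1) := by
        rw [show n+k = (n-k-1) + 1 + 2*k by omega, pow_add, pow_add, pow_mul]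
        norm_num
      rw [hsg]
      ring
  rw [hneg]
  ring


lemma fin_filter_le_card (j c : ℕ) (h : c ≤ j) :
    (Finset.univ.filter (fun i : Fin j => c ≤ (i:ℕ))).card = j - c := by
  rcases Nat.lt_or_ge c j with hc | hc
  · have : (Finset.univ.filter (fun i : Fin j => c ≤ (i:ℕ))) = Finset.Ici (⟨c, hc⟩ : Fin j) := by
      ext x; simp [Fin.le_def]
    rw [this, Fin.card_Ici]
  · have hj : c = j := le_antisymm h hc
    subst hj
    rw [Finset.card_eq_zero.mpr, Nat.sub_self]
    ext x
    simpa using Nat.not_le.mpr x.isLt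

lemma fin_filter_lt_card (j : ℕ) (i : Fin j) :
    (Finset.univ.filter (fun i' : Fin j => i' < i)).card = (i:ℕ) := by
  rw [Finset.filter_gt_eq_Iio, Fin.card_Iio]

/-- Functions from `Fin m` to nonempty subsets of `Fin n` whose values are pairwise
comparable (i.e. the image is a chain). -/
def ChainFn (m n : ℕ) : Type :=
  {f : Fin m → Finset (Fin n) // (∀ u u' : Fin m, f u ⊆ f u' ∨ f u' ⊆ f u) ∧ ∀ u, (f u).Nonempty}

instance (m n : ℕ) : Finite (ChainFn m n) := Subtype.finite

section PartA
attribute [local instance] Classical.propDecidable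
variable {m n : ℕ}

abbrev BV (m n : ℕ) := Fin m ⊕ Fin n
abbrev BG (m n : ℕ) := completeBipartiteGraph (Fin m) (Fin n)

/-- out-neighborhoods in R of an orientation -/
noncomputable def outNbr (o : BV m n → BV m n → Prop) : Fin m → Finset (Fin n) :=
  fun u => univ.filter (fun v => o (Sum.inl u) (Sum.inr v))

/-- orientation induced by a chain function -/
def orientOf (f : Fin m → Finset (Fin n)) : BV m n → BV m n → Prop := fun x y =>
  match x, y with
  | Sum.inl u, Sum.inr v => v ∈ f u
  | Sum.inr v, Sum.inl u => v ∉ f u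
  | _, _ => False

lemma orientOf_isOrientation (f : Fin m → Finset (Fin n)) :
    IsOrientation (BG m n) (orientOf f) := by
  constructor
  · rintro (u | v) (u' | v') h <;> simp_all [orientOf]
  · rintro (u | v) (u' | v') h
    · simp at h
    · exact not_not.symm
    · exact Iff.rfl
    · simp at h

/-- rank of a vertex of R : twice the min cardinality of a set containing it -/
noncomputable def gmin (f : Fin m → Finset (Fin n)) (v : Fin n) : ℕ :=
  if (∃ u, v ∈ f u) then sInf {c | ∃ u, v ∈ f u ∧ (f u).card = c} else n + 1

noncomputable def rkV (f : Fin m → Finset (Fin n)) : BV m n → ℕ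
  | Sum.inl u => 2 * (f u).card
  | Sum.inr v => 2 * gmin f v - 1

lemma orientOf_step (f : Fin m → Finset (Fin n))
    (hcomp : ∀ u u' : Fin m, f u ⊆ f u' ∨ f u' ⊆ f u) :
    ∀ x y, orientOf f x y → rkV f y < rkV f x := by
  rintro (u | v) (u' | v') h <;> simp only [orientOf] at h
  · -- inl u → inr v' : v' ∈ f u
    have hex : ∃ u', v' ∈ f u' := ⟨u, h⟩
    have hmem := Nat.sInf_mem (s := {c | ∃ u', v' ∈ f u' ∧ (f u').card = c}) ⟨(f u).card, u, h, rfl⟩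
    obtain ⟨u₀, hv₀, hc₀⟩ := hmem
    have hle : sInf {c | ∃ u', v' ∈ f u' ∧ (f u').card = c} ≤ (f u).card :=
      Nat.sInf_le ⟨u, h, rfl⟩
    have hpos : 0 < (f u₀).card := Finset.card_pos.mpr ⟨v', hv₀⟩
    simp only [rkV, gmin, if_pos hex]
    omega
  · -- inr v → inl u' : v ∉ f u'
    have hcard : (f u').card < gmin f v := by
      rw [gmin]
      split_ifs with hex
      · have hmem := Nat.sInf_mem (s := {c | ∃ u, v ∈ f u ∧ (f u).card = c})
          (by obtain ⟨u₀, hu₀⟩ := hex; exact ⟨(f u₀).card, u₀, hu₀, rfl⟩)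
        obtain ⟨u₀, hv₀, hc₀⟩ := hmem
        rw [← hc₀]
        apply Finset.card_lt_card
        rcases hcomp u' u₀ with hs | hs
        · exact HasSubset.Subset.ssubset_of_ne hs (fun heq => h (heq ▸ hv₀))
        · exact absurd (hs hv₀) h
      · have : (f u').card ≤ n := le_trans (Finset.card_le_univ _) (by simp)
        omega
    simp only [rkV]
    omega

lemma orientOf_acyclic (f : Fin m → Finset (Fin n))
    (hcomp : ∀ u u' : Fin m, f u ⊆ f u' ∨ f u' ⊆ f u) :
    IsAcyclicRel (orientOf f) := by
  intro x hx
  have htr : Transitive (fun a b : BV m n => rkV f b < rkV f a) := fun a b c h1 h2 => h2.trans h1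
  have hmono := Relation.TransGen.mono (orientOf_step f hcomp) x x hx
  haveI : IsTrans (BV m n) (fun a b : BV m n => rkV f b < rkV f a) := ⟨htr⟩
  rw [Relation.transGen_eq_self] at hmono
  omega

lemma orientOf_no_sink (f : Fin m → Finset (Fin n)) (hne : ∀ u, (f u).Nonempty) :
    ∀ u : Fin m, ¬ IsSinkOf (orientOf f) (Sum.inl u) := by
  intro u hs
  obtain ⟨v, hv⟩ := hne u
  exact hs (Sum.inr v) hv

lemma outNbr_comp (o : BV m n → BV m n → Prop)
    (ho : IsOrientation (BG m n) o) (ha : IsAcyclicRel o) :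
    ∀ u u' : Fin m, outNbr o u ⊆ outNbr o u' ∨ outNbr o u' ⊆ outNbr o u := by
  intro u u'
  by_contra hcon
  push_neg at hcon
  obtain ⟨⟨v, hv1, hv2⟩, ⟨v', hv1', hv2'⟩⟩ :
      (∃ v, v ∈ outNbr o u ∧ v ∉ outNbr o u') ∧ (∃ v', v' ∈ outNbr o u' ∧ v' ∉ outNbr o u) := by
    obtain ⟨h1, h2⟩ := hcon
    exact ⟨Finset.not_subset.mp h1, Finset.not_subset.mp h2⟩
  simp only [outNbr, Finset.mem_filter, Finset.mem_univ, true_and] at hv1 hv2 hv1' hv2'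
  have hadj : ∀ (a : Fin m) (b : Fin n), (BG m n).Adj (Sum.inl a) (Sum.inr b) := by
    intro a b; simp
  have hrev : ∀ (a : Fin m) (b : Fin n), ¬ o (Sum.inl a) (Sum.inr b) → o (Sum.inr b) (Sum.inl a) := by
    intro a b hno
    exact (ho.2 _ _ ((hadj a b).symm)).mpr hno
  have cyc : Relation.TransGen o (Sum.inl u) (Sum.inl u) := by
    apply Relation.TransGen.head hv1
    apply Relation.TransGen.head (hrev u' v hv2)
    apply Relation.TransGen.head hv1'
    exact Relation.TransGen.single (hrev u v' hv2')
  exact ha _ cyc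

lemma outNbr_nonempty (o : BV m n → BV m n → Prop)
    (ho : IsOrientation (BG m n) o) (hs : ∀ u : Fin m, ¬ IsSinkOf o (Sum.inl u)) :
    ∀ u, (outNbr o u).Nonempty := by
  intro u
  have := hs u
  rw [IsSinkOf] at this
  push_neg at this
  obtain ⟨x, hx⟩ := this
  rcases x with u' | v
  · exact absurd (ho.1 _ _ hx) (by simp)
  · exact ⟨v, by simp [outNbr, hx]⟩

noncomputable def orientEquiv (m n : ℕ) :
    {o : BV m n → BV m n → Prop //
        IsOrientation (BG m n) o ∧ IsAcyclicRel o ∧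
        ∀ u : Fin m, ¬ IsSinkOf o (Sum.inl u)} ≃ ChainFn m n where
  toFun x := ⟨outNbr x.1, outNbr_comp x.1 x.2.1 x.2.2.1, outNbr_nonempty x.1 x.2.1 x.2.2.2⟩
  invFun f := ⟨orientOf f.1, orientOf_isOrientation f.1, orientOf_acyclic f.1 f.2.1,
    orientOf_no_sink f.1 f.2.2⟩
  left_inv x := by
    apply Subtype.ext
    funext a b
    apply propext
    obtain ⟨o, ho, ha, hs⟩ := x
    rcases a with u | v <;> rcases b with u' | v'
    · simp only [orientOf]
      constructor
      · exact False.elim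
      · intro h
        exact absurd (ho.1 _ _ h) (by simp)
    · simp [orientOf, outNbr]
    · simp only [orientOf, outNbr, Finset.mem_filter, Finset.mem_univ, true_and]
      have hadj : (BG m n).Adj (Sum.inl u') (Sum.inr v) := by simp
      exact (ho.2 _ _ (hadj.symm)).symm
    · simp only [orientOf]
      constructor
      · exact False.elim
      · intro h
        exact absurd (ho.1 _ _ h) (by simp)
  right_inv f := by
    apply Subtype.ext
    funext u
    ext v
    simp only [outNbr, Finset.mem_filter, Finset.mem_univ, true_and]
    simp [orientOf]

end PartA

lemma card_orient (m n : ℕ) :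
    Nat.card {o : (Fin m ⊕ Fin n) → (Fin m ⊕ Fin n) → Prop //
        IsOrientation (completeBipartiteGraph (Fin m) (Fin n)) o ∧ IsAcyclicRel o ∧
        ∀ u : Fin m, ¬ IsSinkOf o (Sum.inl u)} = Nat.card (ChainFn m n) :=
  Nat.card_congr (orientEquiv m n)

section Toolkit
variable {n : ℕ} (S : Finset (Finset (Fin n)))

/-- rank of a set in a chain -/
def rnk (B : Finset (Fin n)) : ℕ := (S.filter (· ⊂ B)).card
/-- number of sets containing v -/
def tct (v : Fin n) : ℕ := (S.filter (fun B => v ∈ B)).card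

variable (hc : ∀ B ∈ S, ∀ C ∈ S, B ⊆ C ∨ C ⊆ B)

lemma rnk_lt_rnk {B C : Finset (Fin n)} (hB : B ∈ S) (hC : C ∈ S) (h : B ⊂ C) :
    rnk S B < rnk S C := by
  apply Finset.card_lt_card
  constructor
  · intro A hA
    rw [Finset.mem_filter] at hA ⊢
    exact ⟨hA.1, hA.2.trans h⟩
  · intro hsub
    have : B ∈ S.filter (· ⊂ C) := Finset.mem_filter.mpr ⟨hB, h⟩
    have := hsub this
    rw [Finset.mem_filter] at this
    exact (ssubset_irrefl B) this.2

lemma rnk_mono {B C : Finset (Fin n)} (h : C ⊆ B) : rnk S C ≤ rnk S B := by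
  apply Finset.card_le_card
  intro A hA
  rw [Finset.mem_filter] at hA ⊢
  exact ⟨hA.1, hA.2.trans_subset h⟩

lemma rnk_lt_card {B : Finset (Fin n)} (hB : B ∈ S) : rnk S B < S.card := by
  apply Finset.card_lt_card
  constructor
  · exact Finset.filter_subset _ _
  · intro hsub
    have := hsub hB
    rw [Finset.mem_filter] at this
    exact (ssubset_irrefl B) this.2

include hc in
lemma ssubset_iff_rnk {B C : Finset (Fin n)} (hB : B ∈ S) (hC : C ∈ S) :
    B ⊂ C ↔ rnk S B < rnk S C := by
  constructor
  · exact rnk_lt_rnk S hB hC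
  · intro h
    rcases hc B hB C hC with hs | hs
    · rcases eq_or_ne B C with rfl | hne
      · omega
      · exact HasSubset.Subset.ssubset_of_ne hs hne
    · exact absurd (rnk_mono S hs) (by omega)

include hc in
lemma rnk_injOn : Set.InjOn (rnk S) S := by
  intro B hB C hC h
  by_contra hne
  rcases hc B (by simpa using hB) C (by simpa using hC) with hs | hs
  · have := rnk_lt_rnk S (by simpa using hB) (by simpa using hC)
      (HasSubset.Subset.ssubset_of_ne hs hne)
    omega
  · have := rnk_lt_rnk S (by simpa using hC) (by simpa using hB)
      (HasSubset.Subset.ssubset_of_ne hs (Ne.symm hne))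
    omega

include hc in
lemma rnk_surj : ∀ i < S.card, ∃ B ∈ S, rnk S B = i := by
  have himg : S.image (rnk S) = range S.card := by
    apply Finset.eq_of_subset_of_card_le
    · intro x hx
      rw [Finset.mem_image] at hx
      obtain ⟨B, hB, rfl⟩ := hx
      exact Finset.mem_range.mpr (rnk_lt_card S hB)
    · rw [Finset.card_range, Finset.card_image_of_injOn (rnk_injOn S hc)]
  intro i hi
  have : i ∈ S.image (rnk S) := by rw [himg]; exact Finset.mem_range.mpr hi
  rw [Finset.mem_image] at this
  obtain ⟨B, hB, hBi⟩ := this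
  exact ⟨B, hB, hBi⟩

include hc in
lemma mem_iff_rnk {B : Finset (Fin n)} (hB : B ∈ S) (v : Fin n) :
    v ∈ B ↔ S.card - tct S v ≤ rnk S B := by
  constructor
  · intro hv
    have hsub : S.filter (fun C => v ∉ C) ⊆ S.filter (· ⊂ B) := by
      intro C hC
      rw [Finset.mem_filter] at hC ⊢
      refine ⟨hC.1, ?_⟩
      rcases hc C hC.1 B hB with hs | hs
      · exact HasSubset.Subset.ssubset_of_ne hs (fun h => hC.2 (h ▸ hv))
      · exact absurd (hs hv) hC.2
    have hcomp : (S.filter (fun C => v ∈ C)).card + (S.filter (fun C => v ∉ C)).card = S.card :=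
      Finset.card_filter_add_card_filter_not _
    have := Finset.card_le_card hsub
    rw [rnk, tct] at *
    omega
  · intro h
    by_contra hv
    have hsub : S.filter (· ⊂ B) ⊂ S.filter (fun C => v ∉ C) := by
      constructor
      · intro C hC
        rw [Finset.mem_filter] at hC ⊢
        refine ⟨hC.1, fun hvC => hv (hC.2.subset hvC)⟩
      · intro hsub'
        have hBmem : B ∈ S.filter (fun C => v ∉ C) := Finset.mem_filter.mpr ⟨hB, hv⟩
        have : B ∈ S.filter (· ⊂ B) := by
          by_contra hB'
          -- B ∈ RHS but B ∉ LHS, contradicting ⊆ direction? No: hsub' : RHS ⊆ LHS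
          exact hB' (hsub' hBmem)
        rw [Finset.mem_filter] at this
        exact (ssubset_irrefl B) this.2
    have hlt := Finset.card_lt_card hsub
    have hcomp : (S.filter (fun C => v ∈ C)).card + (S.filter (fun C => v ∉ C)).card = S.card :=
      Finset.card_filter_add_card_filter_not _
    rw [rnk, tct] at *
    omega

include hc in
lemma level_surj (hne : ∀ B ∈ S, B.Nonempty) :
    ∀ i < S.card, ∃ v : Fin n, S.card - tct S v = i := by
  intro i hi
  obtain ⟨B, hB, hrB⟩ := rnk_surj S hc i hi
  cases i with
  | zero =>
    obtain ⟨v, hv⟩ := hne B hB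
    have := (mem_iff_rnk S hc hB v).mp hv
    refine ⟨v, by omega⟩
  | succ i' =>
    obtain ⟨B', hB', hrB'⟩ := rnk_surj S hc i' (by omega)
    have hss : B' ⊂ B := (ssubset_iff_rnk S hc hB' hB).mpr (by omega)
    obtain ⟨v, hvB, hvB'⟩ := Finset.exists_of_ssubset hss
    have h1 := (mem_iff_rnk S hc hB v).mp hvB
    have h2 := (mem_iff_rnk S hc hB' v).not.mp hvB'
    rw [not_le] at h2
    refine ⟨v, by omega⟩

end Toolkit

section Psi
variable {m n j : ℕ} (g : Fin n → Fin (j+1)) (h : Fin m → Fin j)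

/-- the chain set at level `i` -/
def lvlSet (i : Fin j) : Finset (Fin n) := Finset.univ.filter (fun v => (g v : ℕ) ≤ (i : ℕ))

variable (hg : ∀ i : ℕ, i < j → ∃ v, (g v : ℕ) = i) (hh : Function.Surjective h)

lemma lvlSet_mono {i i' : Fin j} (hii : i ≤ i') : lvlSet g i ⊆ lvlSet g i' := by
  intro v hv
  rw [lvlSet, Finset.mem_filter] at hv ⊢
  exact ⟨hv.1, hv.2.trans hii⟩

include hg in
lemma lvlSet_ssubset {i i' : Fin j} (hii : i < i') : lvlSet g i ⊂ lvlSet g i' := by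
  refine ⟨lvlSet_mono g (le_of_lt hii), fun hsub => ?_⟩
  obtain ⟨v, hv⟩ := hg (i' : ℕ) i'.isLt
  have h1 : v ∈ lvlSet g i' := by
    rw [lvlSet, Finset.mem_filter]
    exact ⟨Finset.mem_univ v, le_of_eq hv⟩
  have h2 := hsub h1
  rw [lvlSet, Finset.mem_filter] at h2
  omega

include hg in
lemma lvlSet_ssubset_iff {i i' : Fin j} : lvlSet g i ⊂ lvlSet g i' ↔ i < i' := by
  constructor
  · intro hss
    by_contra hle
    rw [not_lt] at hle
    exact (ssubset_irrefl _) (hss.trans_subset (lvlSet_mono g hle))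
  · exact lvlSet_ssubset g hg

include hg in
lemma lvlSet_injOn : Function.Injective (lvlSet g) := by
  intro i i' hii
  by_contra hne
  rcases lt_or_gt_of_ne hne with hlt | hlt
  · exact (ssubset_irrefl _) (hii ▸ lvlSet_ssubset g hg hlt)
  · exact (ssubset_irrefl _) (hii ▸ lvlSet_ssubset g hg hlt)

/-- the chain function induced by `(g, h)` -/
def psiFn : Fin m → Finset (Fin n) := fun u => lvlSet g (h u)

include hg hh in
lemma psi_image : Finset.univ.image (psiFn g h) = Finset.univ.image (lvlSet g) := by
  have : psiFn g h = (lvlSet g) ∘ h := rfl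
  rw [this, ← Finset.image_image, Finset.image_univ_of_surjective hh]

include hg hh in
lemma psi_card : (Finset.univ.image (psiFn g h)).card = j := by
  rw [psi_image g h hg hh, Finset.card_image_of_injOn ((lvlSet_injOn g hg).injOn),
    Finset.card_univ, Fintype.card_fin]

include hg hh in
lemma psi_tct (v : Fin n) : tct (Finset.univ.image (psiFn g h)) v = j - (g v : ℕ) := by
  rw [tct, psi_image g h hg hh, Finset.filter_image,
    Finset.card_image_of_injOn ((lvlSet_injOn g hg).injOn.mono (Set.subset_univ _))]
  have : Finset.univ.filter (fun i : Fin j => v ∈ lvlSet g i)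
      = Finset.univ.filter (fun i : Fin j => (g v : ℕ) ≤ (i : ℕ)) := by
    apply Finset.filter_congr
    intro i _
    simp [lvlSet]
  rw [this, fin_filter_le_card j (g v : ℕ) (by omega)]

include hg hh in
lemma psi_rnk (u : Fin m) :
    rnk (Finset.univ.image (psiFn g h)) (psiFn g h u) = (h u : ℕ) := by
  rw [rnk, psi_image g h hg hh, Finset.filter_image,
    Finset.card_image_of_injOn ((lvlSet_injOn g hg).injOn.mono (Set.subset_univ _))]
  have : Finset.univ.filter (fun i : Fin j => lvlSet g i ⊂ psiFn g h u)
      = Finset.univ.filter (fun i : Fin j => i < h u) := by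
    apply Finset.filter_congr
    intro i _
    simp only [psiFn, eq_iff_iff]
    exact lvlSet_ssubset_iff g hg
  rw [this, fin_filter_lt_card j (h u)]

end Psi

/-- The master bijection -/
noncomputable def Psi (m n : ℕ) :
    (Σ j : Fin (n+1), LevelFn n j × SurjFn m j) → ChainFn m n :=
  fun x => ⟨psiFn x.2.1.1 x.2.2.1, by
    intro u u'
    rcases le_total (x.2.2.1 u) (x.2.2.1 u') with hle | hle
    · exact Or.inl (lvlSet_mono _ hle)
    · exact Or.inr (lvlSet_mono _ hle), by
    intro u
    have hpos : 0 < (x.1 : ℕ) := by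
      have := (x.2.2.1 u).isLt
      omega
    obtain ⟨v, hv⟩ := x.2.1.2 0 hpos
    refine ⟨v, ?_⟩
    rw [psiFn, lvlSet, Finset.mem_filter]
    exact ⟨Finset.mem_univ v, by omega⟩⟩

lemma Psi_bijective (m n : ℕ) : Function.Bijective (Psi m n) := by
  constructor
  · rintro ⟨j₁, g₁, h₁⟩ ⟨j₂, g₂, h₂⟩ hEq
    have hf : psiFn g₁.1 h₁.1 = psiFn g₂.1 h₂.1 := congrArg Subtype.val hEq
    have hj : j₁ = j₂ := by
      have e1 := psi_card g₁.1 h₁.1 g₁.2 h₁.2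
      have e2 := psi_card g₂.1 h₂.1 g₂.2 h₂.2
      rw [hf] at e1
      exact Fin.ext (e1.symm.trans e2)
    subst hj
    have hgeq : g₁ = g₂ := by
      apply Subtype.ext; funext v
      have e1 := psi_tct g₁.1 h₁.1 g₁.2 h₁.2 v
      have e2 := psi_tct g₂.1 h₂.1 g₂.2 h₂.2 v
      rw [hf] at e1
      have b1 := (g₁.1 v).isLt
      have b2 := (g₂.1 v).isLt
      exact Fin.ext (by omega)
    have hheq : h₁ = h₂ := by
      apply Subtype.ext; funext u
      have e1 := psi_rnk g₁.1 h₁.1 g₁.2 h₁.2 u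
      have e2 := psi_rnk g₂.1 h₂.1 g₂.2 h₂.2 u
      rw [hf] at e1
      exact Fin.ext (by omega)
    rw [hgeq, hheq]
  · rintro ⟨f, hcomp, hne⟩
    classical
    set S : Finset (Finset (Fin n)) := Finset.univ.image f with hS
    have hcS : ∀ B ∈ S, ∀ C ∈ S, B ⊆ C ∨ C ⊆ B := by
      intro B hB C hC
      rw [hS, Finset.mem_image] at hB hC
      obtain ⟨u, _, rfl⟩ := hB
      obtain ⟨u', _, rfl⟩ := hC
      exact hcomp u u'
    have hneS : ∀ B ∈ S, B.Nonempty := by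
      intro B hB
      rw [hS, Finset.mem_image] at hB
      obtain ⟨u, _, rfl⟩ := hB
      exact hne u
    set jv : ℕ := S.card with hjv
    have hjn : jv ≤ n := by
      have hinj : Set.InjOn Finset.card (↑S : Set (Finset (Fin n))) := by
        intro B hB C hC hcard
        rcases hcS B (by simpa using hB) C (by simpa using hC) with hs | hs
        · exact Finset.eq_of_subset_of_card_le hs (le_of_eq hcard.symm)
        · exact (Finset.eq_of_subset_of_card_le hs (le_of_eq hcard)).symm
      have h1 : S.image Finset.card ⊆ Finset.Icc 1 n := by
        intro c hcmem
        rw [Finset.mem_image] at hcmem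
        obtain ⟨B, hB, rfl⟩ := hcmem
        rw [Finset.mem_Icc]
        exact ⟨Finset.card_pos.mpr (hneS B hB), le_trans (Finset.card_le_univ B)
          (by simp)⟩
      calc jv = (S.image Finset.card).card := (Finset.card_image_of_injOn hinj).symm
        _ ≤ (Finset.Icc 1 n).card := Finset.card_le_card h1
        _ = n := by rw [Nat.card_Icc]; omega
    refine ⟨⟨⟨jv, by omega⟩, ⟨fun v => ⟨jv - tct S v, Nat.lt_succ_of_le (Nat.sub_le _ _)⟩,
        ?_⟩, ⟨fun u => ⟨rnk S (f u), ?_⟩, ?_⟩⟩, ?_⟩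
    · intro i hi
      obtain ⟨v, hv⟩ := level_surj S hcS hneS i hi
      exact ⟨v, hv⟩
    · exact rnk_lt_card S (Finset.mem_image_of_mem f (Finset.mem_univ u))
    · intro i
      obtain ⟨B, hB, hrB⟩ := rnk_surj S hcS (i : ℕ) i.isLt
      rw [hS, Finset.mem_image] at hB
      obtain ⟨u, _, rfl⟩ := hB
      exact ⟨u, Fin.ext (by simpa using hrB)⟩
    · apply Subtype.ext
      funext u
      ext v
      rw [Psi]
      simp only [psiFn, lvlSet, Finset.mem_filter]
      rw [← mem_iff_rnk S hcS (Finset.mem_image_of_mem f (Finset.mem_univ u)) v]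
      simp

lemma card_chainFn (m n : ℕ) :
    Nat.card (ChainFn m n) = ∑ j ∈ range (n + 1), gam n j * sig m j := by
  classical
  have e : (Σ j : Fin (n+1), LevelFn n j × SurjFn m j) ≃ ChainFn m n :=
    Equiv.ofBijective _ (Psi_bijective m n)
  rw [← Nat.card_congr e]
  letI : ∀ j : Fin (n+1), Fintype (LevelFn n j) := fun j => Fintype.ofFinite _
  letI : ∀ j : Fin (n+1), Fintype (SurjFn m j) := fun j => Fintype.ofFinite _
  rw [Nat.card_eq_fintype_card, Fintype.card_sigma]
  have hterm : ∀ j : Fin (n+1), Fintype.card (LevelFn n j × SurjFn m j) = gam n (j:ℕ) * sig m (j:ℕ) := by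
    intro j
    rw [Fintype.card_prod, gam, sig, Nat.card_eq_fintype_card, Nat.card_eq_fintype_card]
  rw [Finset.sum_congr rfl (fun j _ => hterm j)]
  exact Fin.sum_univ_eq_sum_range (fun j => gam n j * sig m j) (n+1)


theorem ao_bipartite_no_left_sink_count (m n : ℕ) (hn : 1 ≤ n) :
    (Nat.card {o : (Fin m ⊕ Fin n) → (Fin m ⊕ Fin n) → Prop //
        IsOrientation (completeBipartiteGraph (Fin m) (Fin n)) o ∧ IsAcyclicRel o ∧
        ∀ u : Fin m, ¬ IsSinkOf o (Sum.inl u)} : ℤ) =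
      (Nat.factorial n : ℤ) * (n : ℤ) ^ m -
        ∑ j ∈ Finset.Icc 1 (n - 1),
          (-1 : ℤ) ^ (j - 1) * (Nat.factorial (n - j) : ℤ) * ((n - j : ℕ) : ℤ) ^ m *
            (stirling n (n - j) : ℤ) := by
  rw [card_orient m n]
  exact final_glue m n hn (card_chainFn m n)
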